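/- Let H be a real vector space, D ⊆ H, and let f : D → H be such that for every α̂ > 0 the map m ↦ m − α̂ f(m) is surjective from D onto H. Then for every α > 0, every k > 0, and every r ∈ H, the map m ↦ m − α(k(r − m) + f(m)) is surjective from D onto H; explicitly, for any y₁ ∈ H there exists m ∈ D with y₁ = m − α(k(r − m) + f(m)). (Part (ii) of the proof of the paper's Theorem 3.1: the range condition for the controlled Landau–Lifshitz operator.) -/
import Mathlib


/-- If for every `α̂ > 0` the map `m ↦ m − α̂ f(m)` maps `D` onto `H`,
then for every `α > 0`, `k > 0` and `r ∈ H`, the map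
`m ↦ m − α(k(r − m) + f(m))` also maps `D` onto `H`: for any `y₁ ∈ H` there is
`m ∈ D` with `y₁ = m − α(k(r − m) + f(m))`. -/
theorem controlled_operator_range_condition
    {H : Type*} [AddCommGroup H] [Module ℝ H]
    (D : Set H) (f : H → H)
    (hrange : ∀ α' : ℝ, 0 < α' → ∀ y : H, ∃ m ∈ D, m - α' • f m = y)
    (α k : ℝ) (hα : 0 < α) (hk : 0 < k) (r : H) :
    ∀ y₁ : H, ∃ m ∈ D, y₁ = m - α • (k • (r - m) + f m) := by
  intro y₁
  have hc : (0:ℝ) < 1 + α * k := by positivity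
  obtain ⟨m, hmD, hm⟩ := hrange (α / (1 + α * k)) (by positivity)
      ((1 + α * k)⁻¹ • (y₁ + (α * k) • r))
  refine ⟨m, hmD, ?_⟩
  have key := congrArg (fun x : H => (1 + α * k) • x) hm
  simp only [smul_sub, smul_smul, smul_add] at key
  rw [mul_div_cancel₀ _ (ne_of_gt hc), mul_inv_cancel₀ (ne_of_gt hc), one_smul,
    mul_inv_cancel_left₀ (ne_of_gt hc)] at key
  have : (1 + α * k) • m - α • f m = y₁ + (α * k) • r := key
  linear_combination (norm := module) -this
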